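/- On ℝ⁴ with coordinates (x₁,y₁,x₂,y₂), the bivector of the Lefschetz model equals the bivector determined by {g,h} dx₁∧dy₁∧dx₂∧dy₂ = dg ∧ dh ∧ dF₁ ∧ dF₂ with F₁ = x₁²−y₁²+x₂²−y₂², F₂ = 2(x₁y₁+x₂y₂), up to an overall nonzero constant factor. Specifically, computing the wedge products yields coefficient {x₁,y₁} proportional to x₂²+y₂², {x₂,y₂} proportional to x₁²+y₁², {x₁,y₂} proportional to −(y₁y₂+x₁x₂), {y₁,x₂} proportional to x₁x₂+y₁y₂, {y₁,y₂} and {x₁,x₂} proportional to y₁x₂−x₁y₂, all with the same constant of proportionality. -/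

import Mathlib

/-- Gradient row of a function on ℝ⁴ at `q`. -/
noncomputable def gradRow (f : (Fin 4 → ℝ) → ℝ) (q : Fin 4 → ℝ) : Fin 4 → ℝ :=
  fun j => fderiv ℝ f q (Pi.single j 1)

/-- The bracket on ℝ⁴ defined by {g,h} dx₁∧dy₁∧dx₂∧dy₂ = dg ∧ dh ∧ dF₁ ∧ dF₂ with
F₁ = x₁²−y₁²+x₂²−y₂² and F₂ = 2(x₁y₁+x₂y₂); coordinates (x₁,y₁,x₂,y₂) = (q 0,q 1,q 2,q 3). -/
noncomputable def lefDetBracket (g h : (Fin 4 → ℝ) → ℝ) (q : Fin 4 → ℝ) : ℝ :=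
  Matrix.det (Matrix.of
    ![gradRow g q, gradRow h q,
      gradRow (fun x => x 0 ^ 2 - x 1 ^ 2 + x 2 ^ 2 - x 3 ^ 2) q,
      gradRow (fun x => 2 * (x 0 * x 1 + x 2 * x 3)) q])

noncomputable def P (i : Fin 4) : (Fin 4 → ℝ) →L[ℝ] ℝ := ContinuousLinearMap.proj i

lemma hP (q : Fin 4 → ℝ) (i : Fin 4) :
    HasFDerivAt (fun x : Fin 4 → ℝ => x i) (P i) q := (P i).hasFDerivAt

lemma P_single (i j : Fin 4) : P i (Pi.single j 1) = if j = i then 1 else 0 := by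
  simp [P, Pi.single_apply, eq_comm]

lemma gradRow_coord (i : Fin 4) (q : Fin 4 → ℝ) :
    gradRow (fun x => x i) q = fun j => if j = i then 1 else 0 := by
  funext j
  rw [gradRow, (hP q i).fderiv, P_single]

lemma hF1 (q : Fin 4 → ℝ) :
    HasFDerivAt (fun x : Fin 4 → ℝ => x 0 ^ 2 - x 1 ^ 2 + x 2 ^ 2 - x 3 ^ 2)
      (((q 0 • P 0 + q 0 • P 0) - (q 1 • P 1 + q 1 • P 1) + (q 2 • P 2 + q 2 • P 2))
        - (q 3 • P 3 + q 3 • P 3)) q := by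
  have : (fun x : Fin 4 → ℝ => x 0 ^ 2 - x 1 ^ 2 + x 2 ^ 2 - x 3 ^ 2)
      = fun x => x 0 * x 0 - x 1 * x 1 + x 2 * x 2 - x 3 * x 3 := by funext x; ring
  rw [this]
  exact ((((hP q 0).mul (hP q 0)).sub ((hP q 1).mul (hP q 1))).add
    ((hP q 2).mul (hP q 2))).sub ((hP q 3).mul (hP q 3))

lemma hF2 (q : Fin 4 → ℝ) :
    HasFDerivAt (fun x : Fin 4 → ℝ => 2 * (x 0 * x 1 + x 2 * x 3))
      ((2:ℝ) • ((q 0 • P 1 + q 1 • P 0) + (q 2 • P 3 + q 3 • P 2))) q :=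
  (((hP q 0).mul (hP q 1)).add ((hP q 2).mul (hP q 3))).const_mul 2

lemma gradRow_F1 (q : Fin 4 → ℝ) :
    gradRow (fun x => x 0 ^ 2 - x 1 ^ 2 + x 2 ^ 2 - x 3 ^ 2) q
      = ![2 * q 0, -(2 * q 1), 2 * q 2, -(2 * q 3)] := by
  funext j
  rw [gradRow, (hF1 q).fderiv]
  fin_cases j <;>
    simp [P_single] <;> try ring

lemma gradRow_F2 (q : Fin 4 → ℝ) :
    gradRow (fun x => 2 * (x 0 * x 1 + x 2 * x 3)) q
      = ![2 * q 1, 2 * q 0, 2 * q 3, 2 * q 2] := by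
  funext j
  rw [gradRow, (hF2 q).fderiv]
  fin_cases j <;> simp [P_single]

/-- The coordinate brackets of the determinant-defined bracket reproduce, up to a common
nonzero constant, the coefficients of the Lefschetz-model bivector. -/
theorem lefDetBracket_coords :
    ∃ c : ℝ, c ≠ 0 ∧ ∀ q : Fin 4 → ℝ,
      lefDetBracket (fun x => x 0) (fun x => x 1) q = c * (q 2 ^ 2 + q 3 ^ 2) ∧
      lefDetBracket (fun x => x 2) (fun x => x 3) q = c * (q 0 ^ 2 + q 1 ^ 2) ∧
      lefDetBracket (fun x => x 0) (fun x => x 3) q = c * (-(q 1 * q 3 + q 0 * q 2)) ∧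
      lefDetBracket (fun x => x 1) (fun x => x 2) q = c * (q 0 * q 2 + q 1 * q 3) ∧
      lefDetBracket (fun x => x 1) (fun x => x 3) q = c * (q 1 * q 2 - q 0 * q 3) ∧
      lefDetBracket (fun x => x 0) (fun x => x 2) q = c * (q 1 * q 2 - q 0 * q 3) := by
  refine ⟨4, by norm_num, fun q => ?_⟩
  refine ⟨?_, ?_, ?_, ?_, ?_, ?_⟩ <;>
  · rw [lefDetBracket, gradRow_F1, gradRow_F2, gradRow_coord, gradRow_coord]
    simp [Matrix.det_succ_row_zero, Fin.sum_univ_succ, Fin.succAbove]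
    ring
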